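/- Let 0 < λ < 1 and define P(k) = (1−λ)λ^k/(1−λ^{k+1}) for integers k ≥ 0 (the tail probabilities Pr[K > k] of the maximum number K of customers present during an M/M/1 busy period), and T_l(λ) = Σ_{n≥1} n^l λ^n/(1−λ^n). Then for every integer m ≥ 1, the m-th moment of K, namely Σ_{k≥0} ((k+1)^m − k^m)·P(k), equals ((1−λ)/λ) · Σ_{l=0}^{m−1} C(m,l) (−1)^{m−1−l} T_l(λ). -/

import Mathlib

open Finset

lemma binom_id (m : ℕ) (hm : 1 ≤ m) (x : ℝ) :
    ∑ l ∈ Finset.range m, (Nat.choose m l : ℝ) * (-1) ^ (m - 1 - l) * x ^ l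
      = x ^ m - (x - 1) ^ m := by
  have h := add_pow x (-1 : ℝ) m
  rw [Finset.sum_range_succ] at h
  have hx : x + (-1) = x - 1 := by ring
  rw [hx] at h
  simp only [Nat.sub_self, pow_zero, Nat.choose_self, Nat.cast_one, mul_one] at h
  have : (x - 1) ^ m = (∑ l ∈ Finset.range m, x ^ l * (-1 : ℝ) ^ (m - l) * (Nat.choose m l : ℝ)) + x ^ m := h
  rw [this]
  have : ∑ l ∈ Finset.range m, (Nat.choose m l : ℝ) * (-1) ^ (m - 1 - l) * x ^ l
      = -∑ l ∈ Finset.range m, x ^ l * (-1 : ℝ) ^ (m - l) * (Nat.choose m l : ℝ) := by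
    rw [← Finset.sum_neg_distrib]
    apply Finset.sum_congr rfl
    intro l hl
    have hl' : l < m := Finset.mem_range.mp hl
    have h1 : m - l = (m - 1 - l) + 1 := by omega
    rw [h1, pow_succ]
    ring
  rw [this]; ring

theorem stmt2 (lam : ℝ) (h0 : 0 < lam) (h1 : lam < 1) (m : ℕ) (hm : 1 ≤ m) :
    ∑' k : ℕ, (((k : ℝ) + 1) ^ m - (k : ℝ) ^ m) * ((1 - lam) * lam ^ k / (1 - lam ^ (k + 1)))
    = ((1 - lam) / lam) * ∑ l ∈ Finset.range m,
        (Nat.choose m l : ℝ) * (-1) ^ (m - 1 - l) *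
          ∑' n : ℕ, ((n : ℝ) + 1) ^ l * lam ^ (n + 1) / (1 - lam ^ (n + 1)) := by
  have hlam0 : lam ≠ 0 := ne_of_gt h0
  have hlt : ∀ k : ℕ, lam ^ (k + 1) < 1 := fun k => pow_lt_one₀ h0.le h1 (Nat.succ_ne_zero k)
  have hden : ∀ k : ℕ, (0:ℝ) < 1 - lam ^ (k + 1) := fun k => by linarith [hlt k]
  have hsum : ∀ l : ℕ, Summable (fun n : ℕ => ((n : ℝ) + 1) ^ l * lam ^ (n + 1) / (1 - lam ^ (n + 1))) := by
    intro l
    have hs : Summable (fun n : ℕ => (n : ℝ) ^ l * lam ^ n) := by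
      have : ‖lam‖ < 1 := by rw [Real.norm_eq_abs, abs_of_pos h0]; exact h1
      exact summable_pow_mul_geometric_of_norm_lt_one l this
    have hs2 : Summable (fun n : ℕ => ((n : ℝ) + 1) ^ l * lam ^ (n + 1)) := by
      have := hs.comp_injective (add_left_injective 1)
      convert this using 2 with n
      · rfl
      simp only [Function.comp]
      push_cast
      ring
    have hs3 : Summable (fun n : ℕ => ((n : ℝ) + 1) ^ l * lam ^ (n + 1) * (1 / (1 - lam))) :=
      hs2.mul_right _
    apply Summable.of_nonneg_of_le _ _ hs3
    · intro n
      apply div_nonneg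
      · positivity
      · exact (hden n).le
    · intro n
      rw [div_eq_mul_one_div]
      apply mul_le_mul_of_nonneg_left _ (by positivity)
      have hle : lam ^ (n + 1) ≤ lam := by
        simpa using pow_le_pow_of_le_one h0.le h1.le (Nat.one_le_iff_ne_zero.mpr (Nat.succ_ne_zero n))
      exact one_div_le_one_div_of_le (by linarith) (by linarith)
  have step1 : ∑' k : ℕ, (((k : ℝ) + 1) ^ m - (k : ℝ) ^ m) * ((1 - lam) * lam ^ k / (1 - lam ^ (k + 1)))
      = ∑' k : ℕ, ∑ l ∈ Finset.range m,
          ((1 - lam) / lam * ((Nat.choose m l : ℝ) * (-1) ^ (m - 1 - l)))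
            * (((k : ℝ) + 1) ^ l * lam ^ (k + 1) / (1 - lam ^ (k + 1))) := by
    apply tsum_congr
    intro k
    have hb := binom_id m hm ((k : ℝ) + 1)
    simp only [add_sub_cancel_right] at hb
    rw [← hb, Finset.sum_mul]
    apply Finset.sum_congr rfl
    intro l hl
    have hdk := (hden k).ne'
    field_simp
    ring
  rw [step1, Summable.tsum_finsetSum, Finset.mul_sum]
  · apply Finset.sum_congr rfl
    intro l hl
    rw [tsum_mul_left]
    ring
  · intro l hl
    exact (hsum l).mul_left _
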